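/- Let H be a complex Hilbert space and let S, T, C be bounded linear operators on H. If the pair (S, T) satisfies the Fuglede–Putnam property and SC = CT, then S*SC = SS*C. -/
import Mathlib

/-- if the pair `(S, T)` satisfies the Fuglede–Putnam property and
`SC = CT`, then `S*SC = SS*C`. -/
theorem star_mul_eq_mul_star_of_fugledePutnam
    {H : Type*} [NormedAddCommGroup H] [InnerProductSpace ℂ H] [CompleteSpace H]
    (S T C : H →L[ℂ] H)
    (hFP : ∀ W : H →L[ℂ] H, S * W = W * T →
      ContinuousLinearMap.adjoint S * W = W * ContinuousLinearMap.adjoint T)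
    (hC : S * C = C * T) :
    ContinuousLinearMap.adjoint S * S * C = S * ContinuousLinearMap.adjoint S * C := by
  have h1 := hFP C hC
  have h2 := hFP (S * C) (by rw [mul_assoc, hC])
  calc ContinuousLinearMap.adjoint S * S * C
      = ContinuousLinearMap.adjoint S * (S * C) := by rw [mul_assoc]
    _ = S * C * ContinuousLinearMap.adjoint T := h2
    _ = S * (C * ContinuousLinearMap.adjoint T) := by rw [mul_assoc]
    _ = S * (ContinuousLinearMap.adjoint S * C) := by rw [h1]
    _ = S * ContinuousLinearMap.adjoint S * C := by rw [mul_assoc]
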